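/- Let u_- ≥ 0 ≥ u_+ with u_- > u_+ and v_± > 0, and let v_*(ε) be the two-shock intermediate density and u_*(ε) = u_- + ((u_- - √(u_-² + 4ε v_-))/(2v_-))(v_*(ε) - v_-) the intermediate velocity. Then u_*(ε) → u_- + u_+ as ε → 0⁺. -/

import Mathlib

set_option maxHeartbeats 1000000 in
theorem ustar_limit_delta (um up vm vp : ℝ) (h1 : um ≥ 0) (h2 : 0 ≥ up)
    (h3 : um > up) (hvm : 0 < vm) (hvp : 0 < vp) :
    Filter.Tendsto (fun e : ℝ =>
      um + ((um - Real.sqrt (um ^ 2 + 4 * e * vm)) / (2 * vm)) *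
        ((up - um - ((up + Real.sqrt (up ^ 2 + 4 * e * vp)) / (2 * vp)) * vp + ((um - Real.sqrt (um ^ 2 + 4 * e * vm)) / (2 * vm)) * vm) / ((um - Real.sqrt (um ^ 2 + 4 * e * vm)) / (2 * vm) - (up + Real.sqrt (up ^ 2 + 4 * e * vp)) / (2 * vp)) - vm))
      (nhdsWithin 0 (Set.Ioi 0)) (nhds (um + up)) := by
  set F : ℝ → ℝ := fun e =>
    um + ((Real.sqrt (up ^ 2 + 4 * e * vp) - up) * (up - um) + 2 * e * (vm - vp)) /
      ((um + Real.sqrt (um ^ 2 + 4 * e * vm)) + (Real.sqrt (up ^ 2 + 4 * e * vp) - up))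
    with hF
  have hden0 : (um + Real.sqrt (um ^ 2 + 4 * 0 * vm)) + (Real.sqrt (up ^ 2 + 4 * 0 * vp) - up) ≠ 0 := by
    rw [show um ^ 2 + 4 * (0:ℝ) * vm = um ^ 2 by ring, show up ^ 2 + 4 * (0:ℝ) * vp = up ^ 2 by ring,
      Real.sqrt_sq h1, Real.sqrt_sq_eq_abs, abs_of_nonpos h2]
    nlinarith
  have hc : ContinuousAt F 0 := by
    apply ContinuousAt.add continuousAt_const
    apply ContinuousAt.div
    · fun_prop
    · fun_prop
    · exact hden0
  have hF0 : F 0 = um + up := by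
    rw [hF]
    simp only
    rw [show um ^ 2 + 4 * (0:ℝ) * vm = um ^ 2 by ring, show up ^ 2 + 4 * (0:ℝ) * vp = up ^ 2 by ring,
      Real.sqrt_sq h1, Real.sqrt_sq_eq_abs, abs_of_nonpos h2]
    have h4 : um + um + (-up - up) ≠ 0 := by nlinarith
    field_simp [h4]
    have h5 : um * 2 - up * 2 ≠ 0 := by intro h; apply h4; linarith
    have h6 : (um * 2 - up * 2)⁻¹ * (um * 2 - up * 2) = 1 := inv_mul_cancel₀ h5
    linear_combination up * h6
  have hT : Filter.Tendsto F (nhdsWithin 0 (Set.Ioi 0)) (nhds (um + up)) := by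
    rw [← hF0]
    exact hc.continuousWithinAt.tendsto
  apply Filter.Tendsto.congr' _ hT
  filter_upwards [self_mem_nhdsWithin] with e he
  simp only [Set.mem_Ioi] at he
  simp only [hF]
  set a := Real.sqrt (um ^ 2 + 4 * e * vm) with haa
  set b := Real.sqrt (up ^ 2 + 4 * e * vp) with hbb
  have ha2 : a ^ 2 = um ^ 2 + 4 * e * vm := Real.sq_sqrt (by nlinarith [sq_nonneg um])
  have hb2 : b ^ 2 = up ^ 2 + 4 * e * vp := Real.sq_sqrt (by nlinarith [sq_nonneg up])
  have hapos : 0 < a := Real.sqrt_pos.mpr (by nlinarith [sq_nonneg um])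
  have hbpos : 0 < b := Real.sqrt_pos.mpr (by nlinarith [sq_nonneg up])
  have hA : 0 < um + a := by linarith
  have hB : 0 < b - up := by linarith
  have hsm : (um - a) / (2 * vm) = -2 * e / (um + a) := by
    field_simp
    nlinarith [ha2]
  have hsp : (up + b) / (2 * vp) = 2 * e / (b - up) := by
    field_simp
    nlinarith [hb2]
  have hd : -2 * e / (um + a) - 2 * e / (b - up) =
      (-2 * e * ((um + a) + (b - up))) / ((um + a) * (b - up)) := by
    field_simp
    ring
  have hS : (um + a) + (b - up) ≠ 0 := ne_of_gt (by linarith)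
  rw [hsm, hsp, hd]
  field_simp
  ring
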